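/- Let g : ℝⁿ → ℝ be convex and continuous, β > 0, ε ≥ 0, and let w := x_{k+1} + λ_k/β for given x_{k+1}, λ_k ∈ ℝⁿ. Suppose y_{k+1} ∈ ℝⁿ is an ε-minimizer of ψ(y) := g(y) + (β/2)‖y − w‖², i.e. ψ(y_{k+1}) ≤ ψ(y) + ε for all y ∈ ℝⁿ. Then there exists r ∈ ℝⁿ with ‖r‖ ≤ √(2ε/β) such that β(x_{k+1} + λ_k/β − y_{k+1} − r) is an ε-subgradient of g at y_{k+1}, i.e. g(z) ≥ g(y_{k+1}) + ⟨β(x_{k+1} + λ_k/β − y_{k+1} − r), z − y_{k+1}⟩ − ε for all z ∈ ℝⁿ. -/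

import Mathlib

open scoped RealInnerProductSpace

private lemma aux_limit (X Y Z δ : ℝ) (hδ : 0 < δ)
    (h : ∀ t : ℝ, 0 < t → t ≤ δ → X ≤ Y + t * Z) : X ≤ Y := by
  by_contra h'
  push_neg at h'
  rcases le_or_gt Z 0 with hZ | hZ
  · have := h δ hδ le_rfl
    nlinarith
  · set t := min δ ((X - Y) / (2 * Z)) with ht
    have ht0 : 0 < t := lt_min hδ (div_pos (by linarith) (by linarith))
    have h1 := h t ht0 (min_le_left _ _)
    have h2 : t * Z ≤ ((X - Y) / (2 * Z)) * Z :=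
      mul_le_mul_of_nonneg_right (min_le_right _ _) hZ.le
    have h3 : ((X - Y) / (2 * Z)) * Z = (X - Y) / 2 := by field_simp
    nlinarith

private lemma normsq_add_smul {n : ℕ} (a c : EuclideanSpace ℝ (Fin n)) (t : ℝ) :
    ‖a + t • c‖ ^ 2 = ‖a‖ ^ 2 + 2 * t * ⟪a, c⟫ + t ^ 2 * ‖c‖ ^ 2 := by
  rw [norm_add_sq_real, real_inner_smul_right, norm_smul]
  simp [mul_pow, sq_abs]
  ring

set_option maxHeartbeats 1000000 in
theorem stmt14 {n : ℕ} (g : EuclideanSpace ℝ (Fin n) → ℝ)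
    (hgconv : ConvexOn ℝ Set.univ g) (hgcont : Continuous g)
    (β ε : ℝ) (hβ : 0 < β) (hε : 0 ≤ ε)
    (xk1 lamk yk1 : EuclideanSpace ℝ (Fin n))
    (hmin : ∀ y, g yk1 + (β/2) * ‖yk1 - (xk1 + (1/β) • lamk)‖^2
      ≤ g y + (β/2) * ‖y - (xk1 + (1/β) • lamk)‖^2 + ε) :
    ∃ r : EuclideanSpace ℝ (Fin n), ‖r‖ ≤ Real.sqrt (2*ε/β) ∧
      ∀ z, g z ≥ g yk1 + ⟪β • (xk1 + (1/β) • lamk - yk1 - r), z - yk1⟫ - ε := by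
  set w := xk1 + (1/β) • lamk with hw
  set S := Real.sqrt (2*ε/β) with hS
  have hS0 : 0 ≤ S := Real.sqrt_nonneg _
  set R := S + 1 with hR
  have hR0 : 0 < R := by positivity
  obtain ⟨ys, hysK, hysmin⟩ :=
    (isCompact_closedBall yk1 R).exists_isMinOn (⟨yk1, by simp [hR0.le]⟩ : Set.Nonempty _)
      ((Continuous.add hgcont (by continuity)).continuousOn :
        ContinuousOn (fun y => g y + (β/2) * ‖y - w‖^2) _)
  have hysmin' : ∀ y ∈ Metric.closedBall yk1 R,
      g ys + (β/2) * ‖ys - w‖^2 ≤ g y + (β/2) * ‖y - w‖^2 := fun y hy => hysmin hy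
  have hysball : ‖ys - yk1‖ ≤ R := by
    simpa [Metric.mem_closedBall, dist_eq_norm] using hysK
  have hconv : ∀ (d : EuclideanSpace ℝ (Fin n)) (t : ℝ), 0 ≤ t → t ≤ 1 →
      g (ys + t • d) ≤ (1 - t) * g ys + t * g (ys + d) := by
    intro d t ht0 ht1
    have := hgconv.2 (Set.mem_univ ys) (Set.mem_univ (ys + d))
      (by linarith : (0:ℝ) ≤ 1 - t) ht0 (by ring)
    have heq : (1 - t) • ys + t • (ys + d) = ys + t • d := by module
    rw [heq] at this
    simpa [smul_eq_mul] using this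
  have key : ∀ (p : EuclideanSpace ℝ (Fin n)) (δ : ℝ), 0 < δ → δ ≤ 1 →
      (∀ t : ℝ, 0 < t → t ≤ δ → ys + t • (p - ys) ∈ Metric.closedBall yk1 R) →
      g ys + (β/2) * ‖ys - w‖^2 + (β/2) * ‖p - ys‖^2 ≤ g p + (β/2) * ‖p - w‖^2 := by
    intro p δ hδ0 hδ1 hmem
    refine aux_limit _ _ ((β/2) * ‖p - ys‖^2) δ hδ0 ?_
    intro t ht0 htδ
    have ht1 : t ≤ 1 := le_trans htδ hδ1
    have h1 := hysmin' _ (hmem t ht0 htδ)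
    have h2 := hconv (p - ys) t ht0.le ht1
    have h3 : ys + (p - ys) = p := by module
    rw [h3] at h2
    have h4 : ys + t • (p - ys) - w = (ys - w) + t • (p - ys) := by module
    have h5 : ‖ys + t • (p - ys) - w‖^2
        = ‖ys - w‖^2 + 2*t*⟪ys - w, p - ys⟫ + t^2 * ‖p - ys‖^2 := by
      rw [h4, normsq_add_smul]
    have h6 : ‖p - w‖^2 = ‖ys - w‖^2 + 2*⟪ys - w, p - ys⟫ + ‖p - ys‖^2 := by
      have hpw : p - w = (ys - w) + (1:ℝ) • (p - ys) := by module
      rw [hpw, normsq_add_smul]; ring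
    have h7 : t * (g ys) ≤ t * (g p + β*⟪ys - w, p - ys⟫ + (β/2)*t*‖p - ys‖^2) := by
      nlinarith [h1, h2, h5]
    have h8 := (mul_le_mul_iff_right₀ ht0).mp h7
    have h6' : (β/2) * ‖p - w‖^2
        = (β/2) * ‖ys - w‖^2 + β*⟪ys - w, p - ys⟫ + (β/2) * ‖p - ys‖^2 := by
      rw [h6]; ring
    linarith [h6', h8]
  -- Step A: strong convexity bound
  have stepA : ‖ys - yk1‖^2 ≤ 2*ε/β := by
    have hmemA : ∀ t : ℝ, 0 < t → t ≤ 1 →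
        ys + t • (yk1 - ys) ∈ Metric.closedBall yk1 R := by
      intro t ht0 ht1
      have heq : ys + t • (yk1 - ys) - yk1 = (1 - t) • (ys - yk1) := by module
      rw [Metric.mem_closedBall, dist_eq_norm, heq, norm_smul, Real.norm_eq_abs,
        abs_of_nonneg (by linarith : (0:ℝ) ≤ 1 - t)]
      nlinarith [norm_nonneg (ys - yk1)]
    have hk := key yk1 1 one_pos le_rfl hmemA
    have hε' := hmin ys
    rw [norm_sub_rev, le_div_iff₀ hβ]
    nlinarith
  have hrnorm : ‖ys - yk1‖ ≤ S := by
    rw [show ‖ys - yk1‖ = Real.sqrt (‖ys - yk1‖^2) from (Real.sqrt_sq (norm_nonneg _)).symm]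
    exact Real.sqrt_le_sqrt stepA
  -- choose r
  refine ⟨ys - yk1, hrnorm, ?_⟩
  intro z
  have hveq : w - yk1 - (ys - yk1) = w - ys := by module
  rw [hveq]
  -- Step B: exact subgradient of g at ys
  have hzδ : (0:ℝ) < min 1 (1/(‖z - ys‖ + 1)) := by
    have : (0:ℝ) < ‖z - ys‖ + 1 := by positivity
    exact lt_min one_pos (by positivity)
  have hmemB : ∀ t : ℝ, 0 < t → t ≤ min 1 (1/(‖z - ys‖ + 1)) →
      ys + t • (z - ys) ∈ Metric.closedBall yk1 R := by
    intro t ht0 htδ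
    have ht1 : t ≤ 1 := le_trans htδ (min_le_left _ _)
    have ht2 : t ≤ 1/(‖z - ys‖ + 1) := le_trans htδ (min_le_right _ _)
    rw [Metric.mem_closedBall, dist_eq_norm]
    have heq : ys + t • (z - ys) - yk1 = (ys - yk1) + t • (z - ys) := by module
    rw [heq]
    have hbd : ‖(ys - yk1) + t • (z - ys)‖ ≤ ‖ys - yk1‖ + t * ‖z - ys‖ := by
      calc ‖(ys - yk1) + t • (z - ys)‖ ≤ ‖ys - yk1‖ + ‖t • (z - ys)‖ := norm_add_le _ _
        _ = ‖ys - yk1‖ + t * ‖z - ys‖ := by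
            rw [norm_smul, Real.norm_eq_abs, abs_of_pos ht0]
    have hzn : (0:ℝ) < ‖z - ys‖ + 1 := by positivity
    have : t * ‖z - ys‖ ≤ 1 := by
      have h' : t * (‖z - ys‖ + 1) ≤ 1 := by
        rw [one_div] at ht2
        calc t * (‖z - ys‖ + 1) ≤ (‖z - ys‖ + 1)⁻¹ * (‖z - ys‖ + 1) :=
              mul_le_mul_of_nonneg_right ht2 hzn.le
          _ = 1 := inv_mul_cancel₀ hzn.ne'
      nlinarith [norm_nonneg (z - ys)]
    linarith [hrnorm]
  have hkB := key z _ hzδ (min_le_left _ _) hmemB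
  -- rewrite in subgradient form
  have h6 : ‖z - w‖^2 = ‖ys - w‖^2 + 2*⟪ys - w, z - ys⟫ + ‖z - ys‖^2 := by
    have hzw : z - w = (ys - w) + (1:ℝ) • (z - ys) := by module
    rw [hzw, normsq_add_smul]; ring
  have hsub : g z ≥ g ys + β * ⟪w - ys, z - ys⟫ := by
    have hinn : ⟪w - ys, z - ys⟫ = -⟪ys - w, z - ys⟫ := by
      rw [show w - ys = -(ys - w) by module, inner_neg_left]
    rw [hinn]
    nlinarith [hkB, h6]
  -- Step C: transfer to yk1
  have hεup := hmin ys
  have hC : g yk1 ≤ g ys + β * ⟪w - ys, yk1 - ys⟫ + ε := by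
    have h9 : ‖yk1 - w‖^2 = ‖ys - w‖^2 + 2*⟪ys - w, yk1 - ys⟫ + ‖yk1 - ys‖^2 := by
      have hyw : yk1 - w = (ys - w) + (1:ℝ) • (yk1 - ys) := by module
      rw [hyw, normsq_add_smul]; ring
    have hinn : ⟪w - ys, yk1 - ys⟫ = -⟪ys - w, yk1 - ys⟫ := by
      rw [show w - ys = -(ys - w) by module, inner_neg_left]
    rw [hinn]
    nlinarith [sq_nonneg ‖yk1 - ys‖, norm_nonneg (yk1 - ys)]
  have hinner : ⟪β • (w - ys), z - yk1⟫ = β * ⟪w - ys, z - ys⟫ - β * ⟪w - ys, yk1 - ys⟫ := by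
    rw [real_inner_smul_left]
    rw [show z - yk1 = (z - ys) - (yk1 - ys) by module, inner_sub_right]
    ring
  rw [hinner]
  linarith [hsub, hC]
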